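/- Let (G,P) be an EDP instance in which every terminal pair has two distinct endpoints, and let {a,b} be an edge of G such that: a and b each have degree at most 2 in G, no terminal pair of P equals {a,b}, a occurs in at least one terminal pair of P, and b occurs in at least two terminal pairs of P (counted over the index set). Then (G,P) is a NO-instance of EDP, i.e., no solution exists. -/

import Mathlib

/-- A solution to an instance `(G, P)` of the Edge Disjoint Paths problem:
a family of paths, one per terminal pair, that are pairwise edge-disjoint. -/
def EDPSolution {V ι : Type*} (G : SimpleGraph V) (P : ι → V × V)
    (W : ∀ i : ι, G.Walk (P i).1 (P i).2) : Prop :=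
  (∀ i, (W i).IsPath) ∧
    ∀ i j, i ≠ j → ∀ e ∈ (W i).edges, e ∉ (W j).edges

/-- `(G, P)` is a YES-instance of the Edge Disjoint Paths problem. -/
def EDPYes {V ι : Type*} (G : SimpleGraph V) (P : ι → V × V) : Prop :=
  ∃ W : ∀ i : ι, G.Walk (P i).1 (P i).2, EDPSolution G P W

private lemma exists_edge_fst {V : Type*} {G : SimpleGraph V} {u v : V}
    (p : G.Walk u v) (h : u ≠ v) : ∃ w, s(u, w) ∈ p.edges := by
  cases p with
  | nil => exact absurd rfl h
  | cons h' q => exact ⟨_, by rw [SimpleGraph.Walk.edges_cons]; exact List.mem_cons_self⟩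

private lemma exists_edge_snd {V : Type*} {G : SimpleGraph V} {u v : V}
    (p : G.Walk u v) (h : u ≠ v) : ∃ w, s(v, w) ∈ p.edges := by
  obtain ⟨w, hw⟩ := exists_edge_fst p.reverse h.symm
  exact ⟨w, by simpa [SimpleGraph.Walk.edges_reverse] using hw⟩

private lemma two_edges_internal {V : Type*} [DecidableEq V] {G : SimpleGraph V} {u v c : V}
    (p : G.Walk u v) (hp : p.IsPath) (hc : c ∈ p.support) (hcu : c ≠ u) (hcv : c ≠ v) :
    ∃ e₁ e₂, e₁ ≠ e₂ ∧ e₁ ∈ p.edges ∧ e₂ ∈ p.edges ∧ c ∈ e₁ ∧ c ∈ e₂ := by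
  obtain ⟨w₁, hw₁⟩ := exists_edge_snd (p.takeUntil c hc) (Ne.symm hcu)
  obtain ⟨w₂, hw₂⟩ := exists_edge_fst (p.dropUntil c hc) hcv
  have hed : p.edges = (p.takeUntil c hc).edges ++ (p.dropUntil c hc).edges := by
    conv_lhs => rw [← SimpleGraph.Walk.take_spec p hc]
    exact SimpleGraph.Walk.edges_append _ _
  have hnd : p.edges.Nodup := hp.edges_nodup
  rw [hed] at hnd
  have hne : s(c, w₁) ≠ s(c, w₂) := by
    intro h
    exact (List.disjoint_of_nodup_append hnd) hw₁ (h ▸ hw₂)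
  refine ⟨s(c, w₁), s(c, w₂), hne, ?_, ?_, Sym2.mem_mk_left _ _, Sym2.mem_mk_left _ _⟩
  · rw [hed]; exact List.mem_append_left _ hw₁
  · rw [hed]; exact List.mem_append_right _ hw₂

/-- If `{a, b}` is an edge between two vertices of degree at most 2, no
terminal pair equals `{a, b}`, `a` occurs in at least one terminal pair, `b`
occurs in at least two terminal pairs (counted over the index set), and all
terminal pairs have distinct endpoints, then `(G, P)` is a NO-instance. -/
theorem overloaded_edge_no_instance {V : Type*} [Fintype V] [DecidableEq V]
    (G : SimpleGraph V) [DecidableRel G.Adj] {m : ℕ} (P : Fin m → V × V)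
    (hdist : ∀ i, (P i).1 ≠ (P i).2) (a b : V) (hab : G.Adj a b)
    (hda : G.degree a ≤ 2) (hdb : G.degree b ≤ 2)
    (hnotpair : ∀ i, ¬((P i).1 = a ∧ (P i).2 = b) ∧
      ¬((P i).1 = b ∧ (P i).2 = a))
    (hoa : ∃ i, (P i).1 = a ∨ (P i).2 = a)
    (hob : 2 ≤ (Finset.univ.filter fun i => (P i).1 = b ∨ (P i).2 = b).card) :
    ¬ EDPYes G P := by
  rintro ⟨W, hpath, hdisj⟩
  have hinc : ∀ (v : V) (k : Fin m) (e : Sym2 V), e ∈ (W k).edges → v ∈ e →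
      e ∈ G.incidenceFinset v := by
    intro v k e he hv
    rw [SimpleGraph.mem_incidenceFinset]
    exact ⟨(W k).edges_subset_edgeSet he, hv⟩
  -- every path with b as an endpoint has an edge at b
  have hbedge : ∀ k : Fin m, ((P k).1 = b ∨ (P k).2 = b) →
      ∃ w, s(b, w) ∈ (W k).edges := by
    intro k hk
    rcases hk with hk | hk
    · obtain ⟨w, hw⟩ := exists_edge_fst (W k) (hdist k)
      exact ⟨w, by rw [← hk]; exact hw⟩
    · obtain ⟨w, hw⟩ := exists_edge_snd (W k) (hdist k)
      exact ⟨w, by rw [← hk]; exact hw⟩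
  obtain ⟨j₁, hj₁, j₂, hj₂, hjne⟩ := Finset.one_lt_card.mp (by omega : 1 < (Finset.univ.filter fun i => (P i).1 = b ∨ (P i).2 = b).card)
  rw [Finset.mem_filter] at hj₁ hj₂
  obtain ⟨w₁, hw₁⟩ := hbedge j₁ hj₁.2
  obtain ⟨w₂, hw₂⟩ := hbedge j₂ hj₂.2
  have hne12 : s(b, w₁) ≠ s(b, w₂) := by
    intro h
    exact hdisj j₁ j₂ hjne _ hw₁ (h ▸ hw₂)
  -- s(a,b) must be one of these two edges
  have hcases : s(a, b) = s(b, w₁) ∨ s(a, b) = s(b, w₂) := by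
    by_contra hcon
    push_neg at hcon
    have hsub : ({s(a,b), s(b,w₁), s(b,w₂)} : Finset (Sym2 V)) ⊆ G.incidenceFinset b := by
      intro e he
      simp only [Finset.mem_insert, Finset.mem_singleton] at he
      rcases he with rfl | rfl | rfl
      · rw [SimpleGraph.mem_incidenceFinset]
        exact ⟨hab, Sym2.mem_mk_right _ _⟩
      · exact hinc b j₁ _ hw₁ (Sym2.mem_mk_left _ _)
      · exact hinc b j₂ _ hw₂ (Sym2.mem_mk_left _ _)
    have hcard : ({s(a,b), s(b,w₁), s(b,w₂)} : Finset (Sym2 V)).card = 3 := by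
      rw [Finset.card_insert_of_notMem (by simp [hcon.1, hcon.2]),
        Finset.card_insert_of_notMem (by simp [hne12]), Finset.card_singleton]
    have := Finset.card_le_card hsub
    rw [hcard, G.card_incidenceFinset_eq_degree] at this
    omega
  -- so s(a,b) ∈ edges of some W j with b as endpoint
  obtain ⟨j, hjb, hjab⟩ : ∃ j, ((P j).1 = b ∨ (P j).2 = b) ∧ s(a, b) ∈ (W j).edges := by
    rcases hcases with h | h
    · exact ⟨j₁, hj₁.2, h ▸ hw₁⟩
    · exact ⟨j₂, hj₂.2, h ▸ hw₂⟩
  have hane : a ≠ b := hab.ne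
  -- a is not an endpoint of W j
  have hja : (P j).1 ≠ a ∧ (P j).2 ≠ a := by
    rcases hjb with h | h
    · exact ⟨h ▸ hane.symm, fun h2 => (hnotpair j).2 ⟨h, h2⟩⟩
    · exact ⟨fun h1 => (hnotpair j).1 ⟨h1, h⟩, h ▸ hane.symm⟩
  have hasup : a ∈ (W j).support := (W j).fst_mem_support_of_mem_edges hjab
  obtain ⟨e₁, e₂, hne, he₁, he₂, ha₁, ha₂⟩ :=
    two_edges_internal (W j) (hpath j) hasup (Ne.symm hja.1) (Ne.symm hja.2)
  -- the path with a as endpoint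
  obtain ⟨i, hi⟩ := hoa
  have hija : ∃ w, s(a, w) ∈ (W i).edges := by
    rcases hi with h | h
    · obtain ⟨w, hw⟩ := exists_edge_fst (W i) (hdist i)
      exact ⟨w, by rw [← h]; exact hw⟩
    · obtain ⟨w, hw⟩ := exists_edge_snd (W i) (hdist i)
      exact ⟨w, by rw [← h]; exact hw⟩
  obtain ⟨w, hw⟩ := hija
  have hij : i ≠ j := by
    rintro rfl
    rcases hi with h | h
    · exact hja.1 h
    · exact hja.2 h
  have hfne₁ : s(a, w) ≠ e₁ := fun h => hdisj i j hij _ hw (h ▸ he₁)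
  have hfne₂ : s(a, w) ≠ e₂ := fun h => hdisj i j hij _ hw (h ▸ he₂)
  have hsub : ({s(a,w), e₁, e₂} : Finset (Sym2 V)) ⊆ G.incidenceFinset a := by
    intro e he
    simp only [Finset.mem_insert, Finset.mem_singleton] at he
    rcases he with rfl | rfl | rfl
    · exact hinc a i _ hw (Sym2.mem_mk_left _ _)
    · exact hinc a j _ he₁ ha₁
    · exact hinc a j _ he₂ ha₂
  have hcard : ({s(a,w), e₁, e₂} : Finset (Sym2 V)).card = 3 := by
    rw [Finset.card_insert_of_notMem (by simp [hfne₁, hfne₂]),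
      Finset.card_insert_of_notMem (by simp [hne]), Finset.card_singleton]
  have := Finset.card_le_card hsub
  rw [hcard, G.card_incidenceFinset_eq_degree] at this
  omega
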